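/- Let G act on X, let A ⊆ G be finite nonempty and Y ⊆ X finite, and suppose |A · Y| ≤ α|A| for some α ≥ 0. Then there exists a nonempty subset B ⊆ A such that |CB · Y| ≤ α|CB| for every finite subset C of G. -/

import Mathlib

open Pointwise Finset

/-- Petridis–Tao theorem for group actions: if `|A · Y| ≤ α|A|`, then there is a
nonempty `B ⊆ A` with `|CB · Y| ≤ α|CB|` for every finite `C ⊆ G`. -/
theorem stmt_12 {G X : Type*} [Group G] [MulAction G X] [DecidableEq G] [DecidableEq X]
    (A : Finset G) (hA : A.Nonempty) (Y : Finset X)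
    (α : ℝ) (hα : 0 ≤ α)
    (h : ((A • Y).card : ℝ) ≤ α * A.card) :
    ∃ B : Finset G, B ⊆ A ∧ B.Nonempty ∧
      ∀ C : Finset G, (((C * B) • Y).card : ℝ) ≤ α * (C * B).card := by
  classical
  -- choose B minimizing |B•Y|/|B| over nonempty subsets of A
  obtain ⟨B, hBmem, hBmin⟩ := Finset.exists_min_image (A.powerset.erase ∅)
    (fun s => ((s • Y).card : ℝ) / s.card)
    ⟨A, Finset.mem_erase.2 ⟨hA.ne_empty, Finset.mem_powerset.2 (subset_refl A)⟩⟩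
  rw [Finset.mem_erase, Finset.mem_powerset] at hBmem
  obtain ⟨hBne', hBA⟩ := hBmem
  have hBne : B.Nonempty := Finset.nonempty_of_ne_empty hBne'
  have hBpos : (0:ℝ) < B.card := by exact_mod_cast hBne.card_pos
  have hApos : (0:ℝ) < A.card := by exact_mod_cast hA.card_pos
  set β : ℝ := ((B • Y).card : ℝ) / B.card with hβ
  have hβA : β ≤ ((A • Y).card : ℝ) / A.card :=
    hBmin A (Finset.mem_erase.2 ⟨hA.ne_empty, Finset.mem_powerset.2 (subset_refl A)⟩)
  have hβα : β ≤ α := hβA.trans (by rw [div_le_iff₀ hApos]; exact h)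
  have hβ0 : 0 ≤ β := div_nonneg (by positivity) (by positivity)
  have hβB : ((B • Y).card : ℝ) = β * B.card := by
    rw [hβ]; field_simp
  -- minimality: for any B' ⊆ A, β * |B'| ≤ |B' • Y|
  have hmin : ∀ B' ⊆ A, β * B'.card ≤ ((B' • Y).card : ℝ) := by
    intro B' hB'
    rcases B'.eq_empty_or_nonempty with rfl | hB'ne
    · simp
    have hpos : (0:ℝ) < B'.card := by exact_mod_cast hB'ne.card_pos
    have := hBmin B' (Finset.mem_erase.2 ⟨hB'ne.ne_empty, Finset.mem_powerset.2 hB'⟩)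
    rw [le_div_iff₀ hpos] at this
    linarith
  refine ⟨B, hBA, hBne, fun C => ?_⟩
  -- key claim, by induction on C
  have key : ∀ C : Finset G, (((C * B) • Y).card : ℝ) ≤ β * (C * B).card := by
    intro C
    induction C using Finset.induction_on with
    | empty => simp
    | @insert x C hx ih =>
      set K := C * B with hK
      set B' := B ∩ x⁻¹ • K with hB'
      have hB'B : B' ⊆ B := Finset.inter_subset_left
      have h2 : x • B' = x • B ∩ K := by
        rw [hB', smul_finset_inter, smul_inv_smul]
      have h1 : insert x C * B = x • B ∪ K := by
        rw [Finset.insert_eq, Finset.union_mul, Finset.singleton_mul]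
      -- card of insert x C * B
      have hcardK : ((insert x C * B).card : ℝ) = K.card + B.card - B'.card := by
        rw [h1]
        have := Finset.card_union_add_card_inter (x • B) K
        rw [← h2] at this
        have hxB : ((x • B).card : ℕ) = B.card := card_smul_finset x B
        have hxB' : ((x • B').card : ℕ) = B'.card := card_smul_finset x B'
        have : ((x • B ∪ K).card : ℝ) + B'.card = B.card + K.card := by
          exact_mod_cast (by rw [hxB, hxB'] at this; exact_mod_cast this)
        linarith
      -- set of the action
      have h3 : (insert x C * B) • Y = x • (B • Y) ∪ K • Y := by
        rw [h1, Finset.union_smul, smul_assoc]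
      have h4 : x • (B' • Y) ⊆ K • Y := by
        have hxB'K : x • B' ⊆ K := by rw [h2]; exact Finset.inter_subset_right
        calc x • (B' • Y) = (x • B') • Y := (smul_assoc x B' Y).symm
          _ ⊆ K • Y := smul_subset_smul_right hxB'K
      have h5 : x • (B' • Y) ⊆ x • (B • Y) :=
        Finset.smul_finset_subset_smul_finset (smul_subset_smul_right hB'B)
      -- card bound
      have hsub : (insert x C * B) • Y ⊆ K • Y ∪ (x • (B • Y) \ x • (B' • Y)) := by
        rw [h3]
        intro z hz
        rcases Finset.mem_union.1 hz with hz | hz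
        · by_cases hz' : z ∈ x • (B' • Y)
          · exact Finset.mem_union_left _ (h4 hz')
          · exact Finset.mem_union_right _ (Finset.mem_sdiff.2 ⟨hz, hz'⟩)
        · exact Finset.mem_union_left _ hz
      have hsd : ((x • (B • Y) \ x • (B' • Y)).card : ℝ)
          = ((B • Y).card : ℝ) - ((B' • Y).card : ℝ) := by
        rw [Finset.card_sdiff_of_subset h5, Nat.cast_sub (Finset.card_le_card h5),
          card_smul_finset, card_smul_finset]
      have hcard : (((insert x C * B) • Y).card : ℝ)
          ≤ (K • Y).card + ((B • Y).card - (B' • Y).card) := by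
        calc (((insert x C * B) • Y).card : ℝ)
            ≤ ((K • Y ∪ (x • (B • Y) \ x • (B' • Y))).card : ℝ) := by
              exact_mod_cast Finset.card_le_card hsub
          _ ≤ ((K • Y).card : ℝ) + ((x • (B • Y) \ x • (B' • Y)).card : ℝ) := by
              exact_mod_cast Finset.card_union_le _ _
          _ = _ := by rw [hsd]
      have hminB' : β * B'.card ≤ ((B' • Y).card : ℝ) := hmin B' (hB'B.trans hBA)
      calc (((insert x C * B) • Y).card : ℝ)
          ≤ (K • Y).card + ((B • Y).card - (B' • Y).card) := hcard
        _ ≤ β * K.card + (β * B.card - β * B'.card) := by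
            rw [hβB]; have := ih; linarith
        _ = β * (K.card + B.card - B'.card) := by ring
        _ = β * (insert x C * B).card := by rw [hcardK]
  calc (((C * B) • Y).card : ℝ) ≤ β * (C * B).card := key C
    _ ≤ α * (C * B).card := by
        apply mul_le_mul_of_nonneg_right hβα (Nat.cast_nonneg _)
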